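/- The collection of central idempotents of a symmetric monoidal category, with order u ≤ v iff u factors through v (u = v ∘ m for some m : U → V), forms a meet-semilattice: the identity id_I is the top element, and the meet of u : U → I and v : V → I is λ_I ∘ (u ⊗ v) : U ⊗ V → I. -/

import Mathlib

open CategoryTheory MonoidalCategory

variable (C : Type*) [Category C] [MonoidalCategory C]

/-- A central idempotent in a monoidal category, bundled. -/
structure CentralIdempotent where
  U : C
  u : U ⟶ 𝟙_ C
  comm : U ◁ u ≫ (ρ_ U).hom = u ▷ U ≫ (λ_ U).hom
  iso : IsIso (U ◁ u ≫ (ρ_ U).hom)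

variable {C}

/-- Identification of central idempotents: `u ∼ v` iff there is an isomorphism
`m : U ≅ V` with `u = v ∘ m`. -/
def ciSetoid : Setoid (CentralIdempotent C) where
  r a b := ∃ m : a.U ≅ b.U, a.u = m.hom ≫ b.u
  iseqv := by
    constructor
    · exact fun a => ⟨Iso.refl _, by simp⟩
    · rintro a b ⟨m, h⟩
      exact ⟨m.symm, by rw [h]; simp⟩
    · rintro a b c ⟨m, h⟩ ⟨n, h'⟩
      exact ⟨m ≪≫ n, by rw [h, h']; simp⟩

/-- The factorization order on central idempotents: `u ≤ v` iff `u = v ∘ m` for some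
`m : U ⟶ V`. -/
def ciLe (a b : CentralIdempotent C) : Prop := ∃ m : a.U ⟶ b.U, a.u = m ≫ b.u

namespace CIAux

/-- Key uniqueness lemma: factorizations through central idempotents are unique. -/
theorem hom_ext (a b : CentralIdempotent C) (f g : a.U ⟶ b.U)
    (hf : f ≫ b.u = a.u) (hg : g ≫ b.u = a.u) : f = g := by
  haveI := a.iso
  have key : (a.U ◁ a.u ≫ (ρ_ a.U).hom) ≫ f = (a.U ◁ a.u ≫ (ρ_ a.U).hom) ≫ g := by
    calc (a.U ◁ a.u ≫ (ρ_ a.U).hom) ≫ f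
        = a.U ◁ a.u ≫ f ▷ 𝟙_ C ≫ (ρ_ b.U).hom := by
          rw [Category.assoc, rightUnitor_naturality]
      _ = f ▷ a.U ≫ b.U ◁ a.u ≫ (ρ_ b.U).hom := by
          rw [← Category.assoc, ← Category.assoc, whisker_exchange]
      _ = f ▷ a.U ≫ b.U ◁ g ≫ (b.U ◁ b.u ≫ (ρ_ b.U).hom) := by
          rw [← hg, ← MonoidalCategory.whiskerLeft_comp_assoc]
      _ = f ▷ a.U ≫ b.U ◁ g ≫ b.u ▷ b.U ≫ (λ_ b.U).hom := by rw [b.comm]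
      _ = a.U ◁ g ≫ f ▷ b.U ≫ b.u ▷ b.U ≫ (λ_ b.U).hom := by
          rw [← Category.assoc, ← Category.assoc, ← whisker_exchange,
            Category.assoc, Category.assoc]
      _ = a.U ◁ g ≫ a.u ▷ b.U ≫ (λ_ b.U).hom := by
          rw [← comp_whiskerRight_assoc, hf]
      _ = a.u ▷ a.U ≫ 𝟙_ C ◁ g ≫ (λ_ b.U).hom := by
          rw [← Category.assoc, whisker_exchange, Category.assoc]
      _ = (a.u ▷ a.U ≫ (λ_ a.U).hom) ≫ g := by
          rw [leftUnitor_naturality, Category.assoc]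
      _ = (a.U ◁ a.u ≫ (ρ_ a.U).hom) ≫ g := by rw [a.comm]
  exact (cancel_epi _).mp key

theorem ciLe_refl (a : CentralIdempotent C) : ciLe a a :=
  ⟨𝟙 _, (Category.id_comp _).symm⟩

theorem ciLe_trans {a b c : CentralIdempotent C} (h : ciLe a b) (h' : ciLe b c) :
    ciLe a c := by
  obtain ⟨m, hm⟩ := h; obtain ⟨n, hn⟩ := h'
  exact ⟨m ≫ n, by rw [hm, hn, Category.assoc]⟩

theorem ciAntisymm {a b : CentralIdempotent C} (h : ciLe a b) (h' : ciLe b a) :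
    (ciSetoid (C := C)).r a b := by
  obtain ⟨m, hm⟩ := h; obtain ⟨n, hn⟩ := h'
  refine ⟨⟨m, n, ?_, ?_⟩, hm⟩
  · exact hom_ext a a (m ≫ n) (𝟙 _) (by rw [Category.assoc, ← hn, ← hm])
      (Category.id_comp _)
  · exact hom_ext b b (n ≫ m) (𝟙 _) (by rw [Category.assoc, ← hm, ← hn])
      (Category.id_comp _)

theorem ciLe_congr {a a' b b' : CentralIdempotent C}
    (ha : (ciSetoid (C := C)).r a a') (hb : (ciSetoid (C := C)).r b b') :
    ciLe a b ↔ ciLe a' b' := by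
  obtain ⟨e, he⟩ := ha; obtain ⟨f, hf⟩ := hb
  constructor
  · rintro ⟨m, hm⟩
    refine ⟨e.inv ≫ m ≫ f.hom, ?_⟩
    have : a'.u = e.inv ≫ a.u := by rw [he, e.inv_hom_id_assoc]
    rw [this, hm, hf]; simp only [Category.assoc]
  · rintro ⟨m, hm⟩
    refine ⟨e.hom ≫ m ≫ f.inv, ?_⟩
    have : b.u = f.hom ≫ b'.u := hf
    rw [he, hm]; simp [this]

section Symmetric

variable [SymmetricCategory C]

instance tensorμ_isIso (X₁ X₂ Y₁ Y₂ : C) : IsIso (tensorμ X₁ X₂ Y₁ Y₂) :=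
  ⟨tensorδ X₁ X₂ Y₁ Y₂, tensorμ_tensorδ _ _ _ _, tensorδ_tensorμ _ _ _ _⟩

theorem factor_right (a b : CentralIdempotent C) :
    (a.U ⊗ b.U) ◁ ((a.u ⊗ₘ b.u) ≫ (λ_ (𝟙_ C)).hom) ≫ (ρ_ (a.U ⊗ b.U)).hom =
      tensorμ a.U b.U a.U b.U ≫
        ((a.U ◁ a.u ≫ (ρ_ a.U).hom) ⊗ₘ (b.U ◁ b.u ≫ (ρ_ b.U).hom)) := by
  rw [MonoidalCategory.whiskerLeft_comp, Category.assoc,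
    tensor_right_unitality a.U b.U, whiskerLeft_hom_inv_assoc,
    ← Category.assoc, tensorμ_natural_right, Category.assoc, tensorHom_comp_tensorHom]

theorem factor_left (a b : CentralIdempotent C) :
    ((a.u ⊗ₘ b.u) ≫ (λ_ (𝟙_ C)).hom) ▷ (a.U ⊗ b.U) ≫ (λ_ (a.U ⊗ b.U)).hom =
      tensorμ a.U b.U a.U b.U ≫
        ((a.u ▷ a.U ≫ (λ_ a.U).hom) ⊗ₘ (b.u ▷ b.U ≫ (λ_ b.U).hom)) := by
  rw [comp_whiskerRight, Category.assoc,
    tensor_left_unitality a.U b.U, hom_inv_whiskerRight_assoc,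
    ← Category.assoc, tensorμ_natural_left, Category.assoc, tensorHom_comp_tensorHom]

/-- The meet of two central idempotents. -/
def ciInf (a b : CentralIdempotent C) : CentralIdempotent C where
  U := a.U ⊗ b.U
  u := (a.u ⊗ₘ b.u) ≫ (λ_ (𝟙_ C)).hom
  comm := by rw [factor_right, factor_left, a.comm, b.comm]
  iso := by
    rw [factor_right]
    haveI := a.iso; haveI := b.iso
    infer_instance

omit [SymmetricCategory C] in
theorem u_tensor_u (c : CentralIdempotent C) :
    (c.u ⊗ₘ c.u) ≫ (λ_ (𝟙_ C)).hom = (c.U ◁ c.u ≫ (ρ_ c.U).hom) ≫ c.u := by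
  rw [tensorHom_def', Category.assoc, unitors_equal, rightUnitor_naturality,
    Category.assoc]

theorem ciInf_le_left (a b : CentralIdempotent C) : ciLe (ciInf a b) a := by
  refine ⟨a.U ◁ b.u ≫ (ρ_ a.U).hom, ?_⟩
  show (a.u ⊗ₘ b.u) ≫ (λ_ (𝟙_ C)).hom = (a.U ◁ b.u ≫ (ρ_ a.U).hom : a.U ⊗ b.U ⟶ a.U) ≫ a.u
  rw [tensorHom_def', Category.assoc, unitors_equal, rightUnitor_naturality,
    Category.assoc]

theorem ciInf_le_right (a b : CentralIdempotent C) : ciLe (ciInf a b) b := by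
  refine ⟨a.u ▷ b.U ≫ (λ_ b.U).hom, ?_⟩
  show (a.u ⊗ₘ b.u) ≫ (λ_ (𝟙_ C)).hom = (a.u ▷ b.U ≫ (λ_ b.U).hom : a.U ⊗ b.U ⟶ b.U) ≫ b.u
  rw [MonoidalCategory.tensorHom_def, Category.assoc, leftUnitor_naturality, Category.assoc]

theorem ciLe_inf {c a b : CentralIdempotent C} (h : ciLe c a) (h' : ciLe c b) :
    ciLe c (ciInf a b) := by
  obtain ⟨m, hm⟩ := h; obtain ⟨n, hn⟩ := h'
  haveI := c.iso
  refine ⟨inv (c.U ◁ c.u ≫ (ρ_ c.U).hom) ≫ (m ⊗ₘ n), ?_⟩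
  show c.u = (inv (c.U ◁ c.u ≫ (ρ_ c.U).hom) ≫ (m ⊗ₘ n) : c.U ⟶ a.U ⊗ b.U) ≫ ((a.u ⊗ₘ b.u) ≫ (λ_ (𝟙_ C)).hom)
  rw [Category.assoc, ← Category.assoc (m ⊗ₘ n), tensorHom_comp_tensorHom, ← hm, ← hn,
    u_tensor_u, IsIso.inv_hom_id_assoc]

theorem ciInf_congr {a a' b b' : CentralIdempotent C}
    (ha : (ciSetoid (C := C)).r a a') (hb : (ciSetoid (C := C)).r b b') :
    (ciSetoid (C := C)).r (ciInf a b) (ciInf a' b') := by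
  obtain ⟨e, he⟩ := ha; obtain ⟨f, hf⟩ := hb
  refine ⟨e ⊗ᵢ f, ?_⟩
  show (a.u ⊗ₘ b.u) ≫ (λ_ (𝟙_ C)).hom = (e.hom ⊗ₘ f.hom) ≫ ((a'.u ⊗ₘ b'.u) ≫ (λ_ (𝟙_ C)).hom)
  rw [he, hf, tensorHom_comp_tensorHom_assoc]

end Symmetric

end CIAux

open CIAux in
theorem centralIdempotents_semilatticeInf {C : Type*} [Category C] [MonoidalCategory C]
    [SymmetricCategory C] :
    ∃ inst : SemilatticeInf (Quotient (ciSetoid (C := C))),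
      (∀ a b : CentralIdempotent C, inst.le ⟦a⟧ ⟦b⟧ ↔ ciLe a b) ∧
      (∃ (h₁ : 𝟙_ C ◁ 𝟙 (𝟙_ C) ≫ (ρ_ (𝟙_ C)).hom = 𝟙 (𝟙_ C) ▷ 𝟙_ C ≫ (λ_ (𝟙_ C)).hom)
         (h₂ : IsIso (𝟙_ C ◁ 𝟙 (𝟙_ C) ≫ (ρ_ (𝟙_ C)).hom)),
        ∀ a : Quotient (ciSetoid (C := C)),
          inst.le a ⟦⟨𝟙_ C, 𝟙 (𝟙_ C), h₁, h₂⟩⟧) ∧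
      (∀ a b : CentralIdempotent C,
        ∃ (h₁ : (a.U ⊗ b.U) ◁ ((a.u ⊗ₘ b.u) ≫ (λ_ (𝟙_ C)).hom) ≫ (ρ_ (a.U ⊗ b.U)).hom =
            ((a.u ⊗ₘ b.u) ≫ (λ_ (𝟙_ C)).hom) ▷ (a.U ⊗ b.U) ≫ (λ_ (a.U ⊗ b.U)).hom)
          (h₂ : IsIso ((a.U ⊗ b.U) ◁ ((a.u ⊗ₘ b.u) ≫ (λ_ (𝟙_ C)).hom) ≫ (ρ_ (a.U ⊗ b.U)).hom)),
        inst.inf ⟦a⟧ ⟦b⟧ =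
          ⟦⟨a.U ⊗ b.U, (a.u ⊗ₘ b.u) ≫ (λ_ (𝟙_ C)).hom, h₁, h₂⟩⟧) := by
  refine ⟨{
      le := Quotient.lift₂ ciLe (fun _ _ _ _ ha hb => propext (ciLe_congr ha hb))
      lt := fun x y => Quotient.lift₂ ciLe (fun _ _ _ _ ha hb => propext (ciLe_congr ha hb)) x y ∧
        ¬ Quotient.lift₂ ciLe (fun _ _ _ _ ha hb => propext (ciLe_congr ha hb)) y x
      le_refl := fun x => Quotient.inductionOn x fun a => ciLe_refl a
      le_trans := fun x y z => Quotient.inductionOn₃ x y z fun _ _ _ h h' => ciLe_trans h h'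
      lt_iff_le_not_ge := fun _ _ => Iff.rfl
      le_antisymm := fun x y => Quotient.inductionOn₂ x y
        fun _ _ h h' => Quotient.sound (ciAntisymm h h')
      inf := Quotient.lift₂ (fun a b => ⟦ciInf a b⟧)
        (fun _ _ _ _ ha hb => Quotient.sound (ciInf_congr ha hb))
      inf_le_left := fun x y => Quotient.inductionOn₂ x y fun a b => ciInf_le_left a b
      inf_le_right := fun x y => Quotient.inductionOn₂ x y fun a b => ciInf_le_right a b
      le_inf := fun x y z => Quotient.inductionOn₃ x y z fun _ _ _ h h' => ciLe_inf h h' },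
    fun _ _ => Iff.rfl, ⟨by simp [unitors_equal], by simp; infer_instance, ?_⟩, fun a b =>
      ⟨(ciInf a b).comm, (ciInf a b).iso, rfl⟩⟩
  exact fun x => Quotient.inductionOn x fun a => ⟨a.u, (Category.comp_id _).symm⟩
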